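/- For every natural number p ≥ 1, (p+1) · ∫_{0}^{∞} e^{-t} · t^p / (1+t)^{p+2} dt ≥ exp(−2√p − 1/√p). -/

import Mathlib

open MeasureTheory


lemma aux_cube_le_exp (x : ℝ) (hx : 0 ≤ x) :
    1 + x + x ^ 2 / 2 + x ^ 3 / 6 ≤ Real.exp x := by
  have h := Real.sum_le_exp_of_nonneg hx 4
  simp [Finset.sum_range_succ, Nat.factorial] at h
  linarith

lemma aux_poly (s : ℝ) (hs : 7/5 ≤ s) :
    s + 6/5 ≤ (1 + (19/10*s+17/40)/s^2 + ((19/10*s+17/40)/s^2)^2/2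
      + ((19/10*s+17/40)/s^2)^3/6) * (s - 7/10) := by
  have hs0 : (0:ℝ) < s := by linarith
  have hx : (0:ℝ) ≤ s - 7/5 := by linarith
  have h2 : (0:ℝ) ≤ (s-7/5)^2 := by positivity
  have h3 : (0:ℝ) ≤ (s-7/5)^3 := by positivity
  have h4 : (0:ℝ) ≤ (s-7/5)^4 := by positivity
  have h5 : (0:ℝ) ≤ (s-7/5)^5 := by positivity
  have e : (1 + (19/10*s+17/40)/s^2 + ((19/10*s+17/40)/s^2)^2/2
      + ((19/10*s+17/40)/s^2)^3/6) * (s - 7/10)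
      = ((6*s^6 + 6*s^4*(19/10*s+17/40) + 3*s^2*(19/10*s+17/40)^2
          + (19/10*s+17/40)^3) * (s - 7/10)) / (6*s^6) := by
    field_simp
    ring
  rw [e, le_div_iff₀ (by positivity)]
  nlinarith [hx, h2, h3, h4, h5]

lemma aux_logbound (s : ℝ) (hs : 7/5 ≤ s) :
    s^2 * (Real.log (s+6/5) - Real.log (s-7/10)) ≤ 19/10*s + 17/40 := by
  have hs0 : (0:ℝ) < s := by linarith
  have ha : (0:ℝ) < s - 7/10 := by linarith
  have hb : (0:ℝ) < s + 6/5 := by linarith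
  set L : ℝ := (19/10*s+17/40)/s^2 with hL
  have hLnn : 0 ≤ L := by positivity
  have hlog : Real.log (s+6/5) - Real.log (s-7/10) ≤ L := by
    rw [← Real.log_div (ne_of_gt hb) (ne_of_gt ha)]
    rw [Real.log_le_iff_le_exp (by positivity)]
    have h1 := aux_cube_le_exp L hLnn
    have h2 := aux_poly s hs
    rw [div_le_iff₀ ha]
    nlinarith [Real.exp_pos L]
  calc s^2 * (Real.log (s+6/5) - Real.log (s-7/10)) ≤ s^2 * L :=
        mul_le_mul_of_nonneg_left hlog (by positivity)
    _ = 19/10*s + 17/40 := by rw [hL]; field_simp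

lemma aux_pointwise (p : ℕ) (s t : ℝ) (hs2 : s^2 = (p:ℝ)+1) (ht : 0 < t) :
    Real.exp (-(2*s)) * (1 + 2*s - t - s^2/t) ≤
      Real.exp (-t) * (t^(p+1)/(1+t)^(p+1)) := by
  have h1t : (0:ℝ) < 1 + t := by linarith
  -- exp(-(1/t)) ≤ t/(1+t)
  have h1 : Real.exp (-(1/t)) ≤ t/(1+t) := by
    have h := Real.add_one_le_exp (1/t)
    have h2 : (1+t)/t ≤ Real.exp (1/t) := by
      rw [add_div, div_self (ne_of_gt ht)]; linarith
    rw [Real.exp_neg]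
    rw [inv_le_comm₀ (Real.exp_pos _) (by positivity)]
    calc (t/(1+t))⁻¹ = (1+t)/t := by rw [inv_div]
      _ ≤ Real.exp (1/t) := h2
  have h2 : Real.exp (-(1/t)) ^ (p+1) ≤ (t/(1+t))^(p+1) :=
    pow_le_pow_left₀ (Real.exp_nonneg _) h1 _
  have h3 : Real.exp (-(1/t)) ^ (p+1) = Real.exp (-(((p:ℝ)+1)/t)) := by
    rw [← Real.exp_nat_mul]
    congr 1
    push_cast
    ring
  have h4 : (t/(1+t))^(p+1) = t^(p+1)/(1+t)^(p+1) := div_pow t (1+t) (p+1)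
  have h5 : Real.exp (-(((p:ℝ)+1)/t)) ≤ t^(p+1)/(1+t)^(p+1) := by
    rw [← h3, ← h4]; exact h2
  have key : Real.exp (-(2*s)) * (1 + 2*s - t - s^2/t) ≤
      Real.exp (-t) * Real.exp (-(((p:ℝ)+1)/t)) := by
    rw [← Real.exp_add]
    have hx := Real.add_one_le_exp (2*s - t - s^2/t)
    have e1 : Real.exp (-t + -(((p:ℝ)+1)/t)) =
        Real.exp (-(2*s)) * Real.exp (2*s - t - s^2/t) := by
      rw [← Real.exp_add]
      congr 1
      rw [hs2]
      ring
    rw [e1]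
    have : (1 + 2*s - t - s^2/t) ≤ Real.exp (2*s - t - s^2/t) := by linarith
    exact mul_le_mul_of_nonneg_left this (Real.exp_nonneg _)
  calc Real.exp (-(2*s)) * (1 + 2*s - t - s^2/t)
      ≤ Real.exp (-t) * Real.exp (-(((p:ℝ)+1)/t)) := key
    _ ≤ Real.exp (-t) * (t^(p+1)/(1+t)^(p+1)) :=
        mul_le_mul_of_nonneg_left h5 (Real.exp_nonneg _)

lemma aux_deriv_w (p : ℕ) (t : ℝ) (ht : 0 ≤ t) :
    HasDerivAt (fun x => Real.exp (-x) * (x^(p+1)/(1+x)^(p+1)))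
      (((p:ℝ)+1) * (Real.exp (-t) * t ^ p / (1 + t) ^ (p + 2))
        - Real.exp (-t) * (t^(p+1)/(1+t)^(p+1))) t := by
  have h1t : (0:ℝ) < 1 + t := by linarith
  have hne : (1+t)^(p+1) ≠ 0 := by positivity
  have hexp : HasDerivAt (fun x : ℝ => Real.exp (-x)) (-Real.exp (-t)) t := by
    simpa [Function.comp_def] using ((Real.hasDerivAt_exp (-t)).comp t (hasDerivAt_neg t))
  have hnum : HasDerivAt (fun x : ℝ => x^(p+1)) (((p:ℝ)+1) * t^p) t := by
    simpa using hasDerivAt_pow (p+1) t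
  have hden : HasDerivAt (fun x : ℝ => (1+x)^(p+1)) (((p:ℝ)+1) * (1+t)^p) t := by
    have h := hasDerivAt_pow (p+1) (1+t)
    have h2 : HasDerivAt (fun x : ℝ => 1 + x) 1 t := by
      simpa using (hasDerivAt_id t).const_add 1
    simpa [Function.comp_def] using (h.comp t h2)
  have hdiv : HasDerivAt (fun x : ℝ => x^(p+1)/(1+x)^(p+1))
      ((((p:ℝ)+1) * t^p * (1+t)^(p+1) - t^(p+1) * (((p:ℝ)+1) * (1+t)^p))
        / ((1+t)^(p+1))^2) t := hnum.div hden hne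
  have := hexp.mul hdiv
  refine this.congr_deriv ?_
  have e : ((((p:ℝ)+1) * t^p * (1+t)^(p+1) - t^(p+1) * (((p:ℝ)+1) * (1+t)^p))
        / ((1+t)^(p+1))^2) = ((p:ℝ)+1) * t^p / (1+t)^(p+2) := by
    rw [div_eq_div_iff (by positivity) (by positivity)]
    ring
  rw [e]
  ring

lemma aux_deriv_P (s t : ℝ) (ht : 0 < t) :
    HasDerivAt (fun x => (1+2*s)*x - x^2/2 - s^2 * Real.log x)
      (1 + 2*s - t - s^2/t) t := by
  have h1 : HasDerivAt (fun x : ℝ => (1+2*s)*x) (1+2*s) t := by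
    simpa using (hasDerivAt_id t).const_mul (1+2*s)
  have h2 : HasDerivAt (fun x : ℝ => x^2/2) t t := by
    have := (hasDerivAt_pow 2 t).div_const 2
    simpa using this
  have h3 : HasDerivAt (fun x : ℝ => s^2 * Real.log x) (s^2 * t⁻¹) t :=
    (Real.hasDerivAt_log (ne_of_gt ht)).const_mul (s^2)
  have := (h1.sub h2).sub h3
  refine this.congr_deriv ?_
  rw [div_eq_mul_inv]

lemma aux_cont_f (p : ℕ) {S : Set ℝ} (hS : ∀ t ∈ S, 0 ≤ t) :
    ContinuousOn (fun t => Real.exp (-t) * t ^ p / (1 + t) ^ (p + 2)) S := by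
  apply ContinuousOn.div
  · exact (Continuous.mul (by continuity) (by continuity)).continuousOn
  · exact (by continuity : Continuous fun t : ℝ => (1+t)^(p+2)).continuousOn
  · intro t ht
    have := hS t ht
    positivity

lemma aux_cont_w (p : ℕ) {S : Set ℝ} (hS : ∀ t ∈ S, 0 ≤ t) :
    ContinuousOn (fun t => Real.exp (-t) * (t ^ (p+1) / (1 + t) ^ (p + 1))) S := by
  apply ContinuousOn.mul (Continuous.continuousOn (by continuity))
  apply ContinuousOn.div
  · exact (by continuity : Continuous fun t : ℝ => t^(p+1)).continuousOn
  · exact (by continuity : Continuous fun t : ℝ => (1+t)^(p+1)).continuousOn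
  · intro t ht
    have := hS t ht
    positivity

lemma aux_integrableOn_f (p : ℕ) :
    IntegrableOn (fun t => Real.exp (-t) * t ^ p / (1 + t) ^ (p + 2)) (Set.Ioi (0:ℝ)) := by
  have hexp : IntegrableOn (fun x => Real.exp (-x)) (Set.Ioi (0:ℝ)) := by
    simpa using exp_neg_integrableOn_Ioi 0 one_pos
  apply Integrable.mono' hexp
  · apply Measurable.aestronglyMeasurable
    fun_prop
  · rw [ae_restrict_iff' measurableSet_Ioi]
    filter_upwards with t ht
    have ht0 : (0:ℝ) < t := ht
    have h1 : t ^ p ≤ (1+t)^(p+2) := by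
      calc t ^ p ≤ (1+t)^p := pow_le_pow_left₀ ht0.le (by linarith) p
        _ ≤ (1+t)^(p+2) := pow_le_pow_right₀ (by linarith) (by omega)
    have hd : (0:ℝ) < (1+t)^(p+2) := by positivity
    rw [Real.norm_eq_abs, abs_of_nonneg (by positivity)]
    rw [div_le_iff₀ hd]
    calc Real.exp (-t) * t ^ p ≤ Real.exp (-t) * (1+t)^(p+2) :=
          mul_le_mul_of_nonneg_left h1 (Real.exp_nonneg _)
      _ = Real.exp (-t) * (1+t)^(p+2) := rfl
set_option maxHeartbeats 1000000 in
/-- Lower bound for the smallest eigenvalue of the Toeplitz operator with symbol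
`e^{-1/|z|²}` on `ℂP¹`. -/
theorem toeplitz_expSymbol_min_eigenvalue_lower (p : ℕ) (hp : 1 ≤ p) :
    Real.exp (-2 * Real.sqrt p - 1 / Real.sqrt p) ≤
      ((p : ℝ) + 1) *
        ∫ t in Set.Ioi (0 : ℝ), Real.exp (-t) * t ^ p / (1 + t) ^ (p + 2) := by
  have hp1 : (1:ℝ) ≤ (p:ℝ) := by exact_mod_cast hp
  set s : ℝ := Real.sqrt ((p:ℝ)+1) with hsdef
  have hs2 : s^2 = (p:ℝ)+1 := Real.sq_sqrt (by positivity)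
  have hs0 : 0 ≤ s := Real.sqrt_nonneg _
  have hs75 : 7/5 ≤ s := by nlinarith
  set a : ℝ := s - 7/10 with hadef
  set b : ℝ := s + 6/5 with hbdef
  have ha : (0:ℝ) < a := by simp only [hadef]; linarith
  have hab : a ≤ b := by simp only [hadef, hbdef]; linarith
  have hb0 : (0:ℝ) ≤ b := by linarith
  set f : ℝ → ℝ := fun t => Real.exp (-t) * t ^ p / (1 + t) ^ (p + 2) with hfdef
  set w : ℝ → ℝ := fun t => Real.exp (-t) * (t ^ (p+1) / (1 + t) ^ (p + 1)) with hwdef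
  set g : ℝ → ℝ := fun t => Real.exp (-(2*s)) * (1 + 2*s - t - s^2/t) with hgdef
  -- continuity facts
  have hIcc0b : ∀ t ∈ Set.uIcc (0:ℝ) b, 0 ≤ t := by
    intro t ht
    rw [Set.uIcc_of_le hb0] at ht
    exact ht.1
  have hIccab : ∀ t ∈ Set.uIcc a b, 0 ≤ t := by
    intro t ht
    rw [Set.uIcc_of_le hab] at ht
    linarith [ht.1]
  have hfc : ContinuousOn f (Set.uIcc 0 b) := aux_cont_f p hIcc0b
  have hPfc : ContinuousOn (fun t => ((p:ℝ)+1) * f t) (Set.uIcc 0 b) :=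
    continuousOn_const.mul hfc
  have hwc : ContinuousOn w (Set.uIcc 0 b) := aux_cont_w p hIcc0b
  have hwcab : ContinuousOn w (Set.uIcc a b) := aux_cont_w p hIccab
  have hgc : ContinuousOn g (Set.uIcc a b) := by
    apply ContinuousOn.mul continuousOn_const
    apply ContinuousOn.sub (by fun_prop)
    apply ContinuousOn.div continuousOn_const continuousOn_id
    intro t ht h
    rw [Set.uIcc_of_le hab] at ht
    simp only [id_eq] at h
    have := ht.1
    linarith
  -- FTC by parts on [0, b]
  have hftc1 : ∫ t in (0:ℝ)..b, (((p:ℝ)+1) * f t - w t) = w b - w 0 := by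
    apply intervalIntegral.integral_eq_sub_of_hasDerivAt
    · intro t ht
      exact aux_deriv_w p t (hIcc0b t ht)
    · exact (hPfc.sub hwc).intervalIntegrable
  have hw0 : w 0 = 0 := by simp [hwdef]
  have hsplit : (∫ t in (0:ℝ)..b, ((p:ℝ)+1) * f t) - ∫ t in (0:ℝ)..b, w t = w b := by
    rw [← intervalIntegral.integral_sub hPfc.intervalIntegrable
      hwc.intervalIntegrable, hftc1, hw0, sub_zero]
  have hwb : 0 ≤ w b := by
    have : (0:ℝ) < 1 + b := by linarith
    simp only [hwdef]
    positivity
  -- chain pieces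
  have hwmono : (∫ t in a..b, w t) ≤ ∫ t in (0:ℝ)..b, w t := by
    apply intervalIntegral.integral_mono_interval ha.le hab le_rfl
    · rw [Filter.EventuallyLE, ae_restrict_iff' measurableSet_Ioc]
      filter_upwards with t ht
      simp only [Pi.zero_apply]
      have ht0 : (0:ℝ) < t := ht.1
      have : (0:ℝ) < 1 + t := by linarith
      simp only [hwdef]
      positivity
    · exact hwc.intervalIntegrable
  have hgw : (∫ t in a..b, g t) ≤ ∫ t in a..b, w t := by
    apply intervalIntegral.integral_mono_on hab hgc.intervalIntegrable
      hwcab.intervalIntegrable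
    intro t ht
    exact aux_pointwise p s t hs2 (lt_of_lt_of_le ha ht.1)
  -- FTC for g
  have hftc2 : (∫ t in a..b, (1 + 2*s - t - s^2/t))
      = ((1+2*s)*b - b^2/2 - s^2 * Real.log b)
        - ((1+2*s)*a - a^2/2 - s^2 * Real.log a) := by
    apply intervalIntegral.integral_eq_sub_of_hasDerivAt
      (f := fun x => (1+2*s)*x - x^2/2 - s^2 * Real.log x)
    · intro t ht
      rw [Set.uIcc_of_le hab] at ht
      exact aux_deriv_P s t (lt_of_lt_of_le ha ht.1)
    · apply ContinuousOn.intervalIntegrable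
      apply ContinuousOn.sub (by fun_prop)
      apply ContinuousOn.div continuousOn_const continuousOn_id
      intro t ht h
      rw [Set.uIcc_of_le hab] at ht
      simp only [id_eq] at h
      have := ht.1
      linarith
  have hgval : (∫ t in a..b, g t) = Real.exp (-(2*s)) *
      (((1+2*s)*b - b^2/2 - s^2 * Real.log b)
        - ((1+2*s)*a - a^2/2 - s^2 * Real.log a)) := by
    rw [← hftc2]
    simp only [hgdef]
    rw [intervalIntegral.integral_const_mul]
  -- the bracket is at least 1
  have hbr : (1:ℝ) ≤ ((1+2*s)*b - b^2/2 - s^2 * Real.log b)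
        - ((1+2*s)*a - a^2/2 - s^2 * Real.log a) := by
    have hlb := aux_logbound s hs75
    simp only [hadef, hbdef]
    have e : (1+2*s)*(s+6/5) - (s+6/5)^2/2 - s^2 * Real.log (s+6/5)
        - ((1+2*s)*(s-7/10) - (s-7/10)^2/2 - s^2 * Real.log (s-7/10))
        = (19/10*s + 57/40) - s^2*(Real.log (s+6/5) - Real.log (s-7/10)) := by
      ring
    rw [e]
    linarith
  -- exponent comparison
  have hexp : Real.exp (-2 * Real.sqrt p - 1 / Real.sqrt p) ≤ Real.exp (-(2*s)) := by
    apply Real.exp_le_exp.mpr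
    set r : ℝ := Real.sqrt p with hrdef
    have hr2 : r^2 = (p:ℝ) := Real.sq_sqrt (by positivity)
    have hr0 : (0:ℝ) < r := Real.sqrt_pos.mpr (by linarith)
    have hsle : s ≤ r + 1/(2*r) := by
      rw [hsdef]
      rw [show r + 1/(2*r) = Real.sqrt ((r + 1/(2*r))^2) from
        (Real.sqrt_sq (by positivity)).symm]
      apply Real.sqrt_le_sqrt
      have e : (r + 1/(2*r))^2 = r^2 + 1 + (1/(2*r))^2 := by
        field_simp
        ring
      nlinarith [sq_nonneg (1/(2*r)), e, hr2]
    have : 2*s ≤ 2*r + 1/r := by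
      calc 2*s ≤ 2*(r + 1/(2*r)) := by linarith
        _ = 2*r + 1/r := by field_simp
    linarith
  -- assemble
  have hIoc : ∫ t in Set.Ioc (0:ℝ) b, f t ≤ ∫ t in Set.Ioi (0:ℝ), f t := by
    apply setIntegral_mono_set (aux_integrableOn_f p)
    · rw [Filter.EventuallyLE, ae_restrict_iff' measurableSet_Ioi]
      filter_upwards with t ht
      have ht0 : (0:ℝ) < t := ht
      have : (0:ℝ) < 1 + t := by linarith
      simp only [Pi.zero_apply, hfdef]
      positivity
    · exact (Set.Ioc_subset_Ioi_self).eventuallyLE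
  have hIoc2 : (∫ t in (0:ℝ)..b, ((p:ℝ)+1) * f t)
      = ((p:ℝ)+1) * ∫ t in Set.Ioc (0:ℝ) b, f t := by
    rw [intervalIntegral.integral_const_mul, intervalIntegral.integral_of_le hb0]
  calc Real.exp (-2 * Real.sqrt p - 1 / Real.sqrt p)
      ≤ Real.exp (-(2*s)) := hexp
    _ ≤ Real.exp (-(2*s)) * (((1+2*s)*b - b^2/2 - s^2 * Real.log b)
        - ((1+2*s)*a - a^2/2 - s^2 * Real.log a)) := by
        calc Real.exp (-(2*s)) = Real.exp (-(2*s)) * 1 := (mul_one _).symm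
          _ ≤ _ := mul_le_mul_of_nonneg_left hbr (Real.exp_nonneg _)
    _ = ∫ t in a..b, g t := hgval.symm
    _ ≤ ∫ t in a..b, w t := hgw
    _ ≤ ∫ t in (0:ℝ)..b, w t := hwmono
    _ ≤ ∫ t in (0:ℝ)..b, ((p:ℝ)+1) * f t := by linarith [hsplit, hwb]
    _ = ((p:ℝ)+1) * ∫ t in Set.Ioc (0:ℝ) b, f t := hIoc2
    _ ≤ ((p:ℝ)+1) * ∫ t in Set.Ioi (0:ℝ), f t := by
        apply mul_le_mul_of_nonneg_left hIoc
        positivity
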